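/- arXiv:2208.07738 — 2 statements merged into one kernel-verified Lean document; each statement's English description precedes it below -/
import Mathlib

section
/- Let Q be a finite acyclic quiver, d a summand vector with d_v = 0 at some vertex v. Let Q̄ be the quiver obtained by deleting v and replacing each length-2 path α β through v (α ending at v, β starting at v) by a new arrow from s(α) to t(β), keeping all other arrows. Then End(P_{Q,d}) ≅ End(P_{Q̄,d̄}) as k-algebras, where d̄ is d restricted to Q₀∖{v}. -/
/-- A representation of a quiver `Q` over a field `k`: a vector space at each vertex
and a linear map for each arrow. -/
structure QRep (k : Type) [Field k] (Q : Type) [Quiver.{0} Q] where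
  V : Q → Type
  instAddCommGroup : ∀ i, AddCommGroup (V i)
  instModule : ∀ i, Module k (V i)
  map : ∀ {i j : Q}, (i ⟶ j) → (V i →ₗ[k] V j)

attribute [instance] QRep.instAddCommGroup QRep.instModule

/-- A homomorphism of quiver representations. -/
@[ext]
structure QRepHom {k : Type} [Field k] {Q : Type} [Quiver.{0} Q] (M N : QRep k Q) where
  app : ∀ i, M.V i →ₗ[k] N.V i
  comm : ∀ {i j : Q} (a : i ⟶ j), (N.map a).comp (app i) = (app j).comp (M.map a)

namespace QRepHom

variable {k : Type} [Field k] {Q : Type} [Quiver.{0} Q] {M N P : QRep k Q}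

/-- Composition of homomorphisms of representations. -/
def comp (f : QRepHom N P) (g : QRepHom M N) : QRepHom M P where
  app i := (f.app i).comp (g.app i)
  comm {i j} a := by
    rw [← LinearMap.comp_assoc, f.comm, LinearMap.comp_assoc, g.comm,
      LinearMap.comp_assoc]

/-- The identity homomorphism. -/
def id (M : QRep k Q) : QRepHom M M where
  app _ := LinearMap.id
  comm _ := rfl

instance : Zero (QRepHom M N) :=
  ⟨{ app := fun _ => 0, comm := fun _ => by simp }⟩

instance : Add (QRepHom M N) :=
  ⟨fun f g =>
    { app := fun i => f.app i + g.app i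
      comm := fun a => by
        simp only [LinearMap.comp_add, LinearMap.add_comp, f.comm, g.comm] }⟩

instance : Neg (QRepHom M N) :=
  ⟨fun f =>
    { app := fun i => -f.app i
      comm := fun a => by
        simp only [LinearMap.comp_neg, LinearMap.neg_comp, f.comm] }⟩

instance : Sub (QRepHom M N) :=
  ⟨fun f g =>
    { app := fun i => f.app i - g.app i
      comm := fun a => by
        simp only [LinearMap.comp_sub, LinearMap.sub_comp, f.comm, g.comm] }⟩

instance : SMul k (QRepHom M N) :=
  ⟨fun c f =>
    { app := fun i => c • f.app i
      comm := fun a => by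
        simp only [LinearMap.comp_smul, LinearMap.smul_comp, f.comm] }⟩

instance : One (QRepHom M M) := ⟨id M⟩

instance : Mul (QRepHom M M) := ⟨comp⟩

/-- A homomorphism of representations is an isomorphism if it has a two-sided
inverse. -/
def IsIso (f : QRepHom M N) : Prop :=
  ∃ g : QRepHom N M, f.comp g = id N ∧ g.comp f = id M

end QRepHom

/-- The radical of the category of representations:
`Rad(X,Y) = {f : X → Y | ∀ g : Y → X, 1_X - g ∘ f is an isomorphism}`. -/
def QRad {k : Type} [Field k] {Q : Type} [Quiver.{0} Q] (M N : QRep k Q) :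
    Set (QRepHom M N) :=
  {f | ∀ g : QRepHom N M, QRepHom.IsIso (QRepHom.id M - g.comp f)}

/-- The indecomposable projective representation `P(i)`: at vertex `m` it has basis
the paths `i ⇝ m`, with arrows acting by composition of paths. -/
noncomputable def QProj (k : Type) [Field k] {Q : Type} [Quiver.{0} Q] (i : Q) : QRep k Q where
  V m := Quiver.Path i m →₀ k
  instAddCommGroup _ := inferInstance
  instModule _ := inferInstance
  map a := Finsupp.lmapDomain k k fun p => p.cons a

/-- The projective representation `P_{Q,d} = ⊕_{i ∈ Q₀} P(i)^{d_i}` with summand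
vector `d`. -/
noncomputable def QProjD (k : Type) [Field k] (Q : Type) [Quiver.{0} Q] (d : Q → ℕ) : QRep k Q where
  V m := ∀ i : Q, Fin (d i) → (Quiver.Path i m →₀ k)
  instAddCommGroup _ := inferInstance
  instModule _ := inferInstance
  map {m _m'} a := LinearMap.pi fun i => LinearMap.pi fun s =>
    (Finsupp.lmapDomain k k fun p : Quiver.Path i m => p.cons a).comp
      ((LinearMap.proj s :
          (Fin (d i) → (Quiver.Path i m →₀ k)) →ₗ[k] (Quiver.Path i m →₀ k)).comp
        (LinearMap.proj i :
          (∀ j : Q, Fin (d j) → (Quiver.Path j m →₀ k)) →ₗ[k]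
            (Fin (d i) → (Quiver.Path i m →₀ k))))

/-- A quiver is acyclic if the only paths from a vertex to itself are constant. -/
def QAcyclic (Q : Type) [Quiver.{0} Q] : Prop :=
  ∀ (i : Q) (p : Quiver.Path i i), p = Quiver.Path.nil

/-- The quiver `Q̄` obtained from `Q` by removing the vertex `v` and replacing every
length-two path `α β` through `v` by a new arrow, keeping all other arrows. -/
def VertexRemoved (Q : Type) [Quiver.{0} Q] (v : Q) : Type := {x : Q // x ≠ v}

instance (Q : Type) [Quiver.{0} Q] (v : Q) : Quiver.{0} (VertexRemoved Q v) :=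
  ⟨fun x y => (x.1 ⟶ y.1) ⊕ ((x.1 ⟶ v) × (v ⟶ y.1))⟩

namespace ZVR

variable {Q : Type} [Quiver.{0} Q] {v : Q}

/-- Constructor for `VertexRemoved` keeping the `Quiver` instance visible. -/
def vmk (v : Q) (i : Q) (hi : i ≠ v) : VertexRemoved Q v := ⟨i, hi⟩

def psi : ∀ {i m : VertexRemoved Q v}, Quiver.Path i m → Quiver.Path i.1 m.1
  | _, _, .nil => .nil
  | _, _, .cons p (Sum.inl a) => (psi p).cons a
  | _, _, .cons p (Sum.inr ab) => ((psi p).cons ab.1).cons ab.2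

theorem psi_inj {i m : VertexRemoved Q v} : ∀ (p q : Quiver.Path i m), psi p = psi q → p = q := by
  intro p
  induction p with
  | nil =>
    intro q h
    cases q with
    | nil => rfl
    | cons r e =>
      exfalso
      rcases e with a | ⟨α, β⟩ <;> simp only [psi] at h <;>
        exact Quiver.Path.nil_ne_cons _ _ h
  | cons r e ih =>
    rename_i bp mtop
    intro q h
    cases q with
    | nil =>
      exfalso
      rcases e with a | ⟨α, β⟩ <;> simp only [psi] at h <;>
        exact Quiver.Path.cons_ne_nil _ _ h
    | cons r' e' =>
      rename_i bq
      rcases e with a | ⟨α, β⟩ <;> rcases e' with a' | ⟨α', β'⟩ <;> simp only [psi] at h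
      · obtain rfl := Subtype.ext (Quiver.Path.obj_eq_of_cons_eq_cons h)
        obtain rfl := ih r' (eq_of_heq (Quiver.Path.heq_of_cons_eq_cons h))
        obtain rfl := eq_of_heq (Quiver.Path.hom_heq_of_cons_eq_cons h)
        rfl
      · exact absurd (Quiver.Path.obj_eq_of_cons_eq_cons h) bp.2
      · exact absurd (Quiver.Path.obj_eq_of_cons_eq_cons h).symm bq.2
      · obtain rfl := eq_of_heq (Quiver.Path.hom_heq_of_cons_eq_cons h)
        have h2 : (psi r).cons α = (psi r').cons α' :=
          eq_of_heq (Quiver.Path.heq_of_cons_eq_cons h)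
        obtain rfl := Subtype.ext (Quiver.Path.obj_eq_of_cons_eq_cons h2)
        obtain rfl := ih r' (eq_of_heq (Quiver.Path.heq_of_cons_eq_cons h2))
        obtain rfl := eq_of_heq (Quiver.Path.hom_heq_of_cons_eq_cons h2)
        rfl

theorem no_loop (hac : QAcyclic Q) (x : Q) (α : x ⟶ x) : False :=
  Quiver.Path.cons_ne_nil Quiver.Path.nil α (hac x (Quiver.Path.nil.cons α))

theorem psi_surj (hac : QAcyclic Q) :
    ∀ (n : ℕ) {i m : Q} (hi : i ≠ v) (hm : m ≠ v) (p : Quiver.Path i m), p.length ≤ n →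
      ∃ p' : Quiver.Path (vmk v i hi) (vmk v m hm), psi p' = p := by
  intro n
  induction n with
  | zero =>
    intro i m hi hm p hp
    cases p with
    | nil => exact ⟨.nil, by rw [psi]; rfl⟩
    | cons q a => simp [Quiver.Path.length] at hp
  | succ n IH =>
    intro i m hi hm p hp
    cases p with
    | nil => exact ⟨.nil, by rw [psi]; rfl⟩
    | cons q a =>
      rename_i x
      by_cases hx : x = v
      · subst hx
        cases q with
        | nil => exact absurd rfl hi
        | cons q' α =>
          rename_i y
          have hy : y ≠ x := fun h => no_loop hac x (h ▸ α)
          obtain ⟨q0, hq0⟩ := IH hi hy q'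
            (by simp only [Quiver.Path.length] at hp ⊢; omega)
          exact ⟨q0.cons (Sum.inr ⟨α, a⟩), by subst hq0; rw [psi.eq_3]; rfl⟩
      · obtain ⟨q0, hq0⟩ := IH hi hx q
          (by simp only [Quiver.Path.length] at hp ⊢; omega)
        exact ⟨q0.cons (Sum.inl a), by subst hq0; exact psi.eq_2 (vmk v i hi) (vmk v m hm) (vmk v x hx) q0 a⟩

noncomputable def pEquiv (hac : QAcyclic Q) {i m : Q} (hi : i ≠ v) (hm : m ≠ v) :
    Quiver.Path (vmk v i hi) (vmk v m hm) ≃ Quiver.Path i m :=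
  Equiv.ofBijective psi ⟨fun p q => psi_inj p q,
    fun p => psi_surj hac p.length hi hm p le_rfl⟩

@[simp] theorem pEquiv_apply (hac : QAcyclic Q) {i m : Q} (hi : i ≠ v) (hm : m ≠ v)
    (p : Quiver.Path (vmk v i hi) (vmk v m hm)) : pEquiv hac hi hm p = psi p := rfl

@[simp] theorem psi_pEquiv_symm (hac : QAcyclic Q) {i m : Q} (hi : i ≠ v) (hm : m ≠ v)
    (q : Quiver.Path i m) : psi ((pEquiv hac hi hm).symm q) = q :=
  (pEquiv hac hi hm).apply_symm_apply q

theorem pEquiv_symm_cons_inl (hac : QAcyclic Q) {i x m : Q} (hi : i ≠ v) (hx : x ≠ v)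
    (hm : m ≠ v) (p : Quiver.Path i x) (a : x ⟶ m) :
    (pEquiv hac hi hm).symm (p.cons a) =
      ((pEquiv hac hi hx).symm p).cons
        (Sum.inl a : vmk v x hx ⟶ vmk v m hm) := by
  apply psi_inj
  simp only [psi, psi_pEquiv_symm]
  exact ((psi.eq_2 (vmk v i hi) (vmk v m hm) (vmk v x hx) ((pEquiv hac hi hx).symm p) a).trans
    (congrArg (fun q => Quiver.Path.cons q a) (psi_pEquiv_symm hac hi hx p))).symm

theorem pEquiv_symm_cons_inr (hac : QAcyclic Q) {i x m : Q} (hi : i ≠ v) (hx : x ≠ v)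
    (hm : m ≠ v) (p : Quiver.Path i x) (α : x ⟶ v) (β : v ⟶ m) :
    (pEquiv hac hi hm).symm ((p.cons α).cons β) =
      ((pEquiv hac hi hx).symm p).cons
        (Sum.inr ⟨α, β⟩ : vmk v x hx ⟶ vmk v m hm) := by
  apply psi_inj
  simp only [psi, psi_pEquiv_symm]
  rfl

section Rep

variable {k : Type} [Field k] {Q' : Type} [Quiver.{0} Q'] (d' : Q' → ℕ)

@[simp] theorem QProjD_map_apply {x y : Q'} (a : x ⟶ y) (u : (QProjD k Q' d').V x)
    (i : Q') (s : Fin (d' i)) :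
    (QProjD k Q' d').map a u i s = Finsupp.mapDomain (fun p => p.cons a) (u i s) := rfl

/-- The basis-like element of `QProjD` supported at component `(i, s)`. -/
noncomputable def ssingle {x : Q'} (i : Q') (s : Fin (d' i)) (w : Quiver.Path i x →₀ k) :
    (QProjD k Q' d').V x :=
  letI := Classical.decEq Q'
  Pi.single i (Pi.single s w)

theorem map_ssingle {x y : Q'} (a : x ⟶ y) (i : Q') (s : Fin (d' i))
    (w : Quiver.Path i x →₀ k) :
    (QProjD k Q' d').map a (ssingle d' i s w)
      = ssingle d' i s (Finsupp.mapDomain (fun p => p.cons a) w) := by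
  letI := Classical.decEq Q'
  funext j t
  rcases eq_or_ne j i with rfl | hj
  · rcases eq_or_ne t s with rfl | ht
    · rw [QProjD_map_apply]; simp [ssingle]
    · rw [QProjD_map_apply]; simp [ssingle, Pi.single_eq_of_ne ht]
  · rw [QProjD_map_apply]; simp [ssingle, Pi.single_eq_of_ne hj]

theorem hom_ext [Finite Q'] {x : Q'} {W : Type} [AddCommGroup W] [Module k W]
    {f g : (QProjD k Q' d').V x →ₗ[k] W}
    (h : ∀ (i : Q') (s : Fin (d' i)) (p : Quiver.Path i x),
      f (ssingle d' i s (Finsupp.single p 1)) = g (ssingle d' i s (Finsupp.single p 1))) :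
    f = g := by
  letI := Classical.decEq Q'
  refine LinearMap.pi_ext' fun i => LinearMap.pi_ext' fun s =>
    Finsupp.lhom_ext' fun p => LinearMap.ext_ring ?_
  exact h i s p

end Rep

section Main

attribute [local instance 10] Classical.propDecidable

instance VertexRemoved.finite {Q : Type} [Quiver.{0} Q] [Finite Q] (v : Q) :
    Finite (VertexRemoved Q v) := Subtype.finite

variable {k : Type} [Field k] {Q : Type} [Quiver.{0} Q] {v : Q}
  (hac : QAcyclic Q) (d : Q → ℕ) (hv : d v = 0)


/-- Forward comparison map. -/
noncomputable def TTfwd (x : VertexRemoved Q v) :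
    (QProjD k (VertexRemoved Q v) (fun i => d i.1)).V x →ₗ[k] (QProjD k Q d).V x.1 :=
  LinearMap.pi fun i =>
    if h : i = v then 0 else
      LinearMap.pi fun s => (Finsupp.domLCongr (M := k) (R := k) (pEquiv hac h x.2)).toLinearMap ∘ₗ
        LinearMap.proj s ∘ₗ LinearMap.proj (R := k) (vmk v i h)

/-- Backward comparison map. -/
noncomputable def TTbwd (x : VertexRemoved Q v) :
    (QProjD k Q d).V x.1 →ₗ[k] (QProjD k (VertexRemoved Q v) (fun i => d i.1)).V x :=
  LinearMap.pi fun (i : VertexRemoved Q v) =>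
    LinearMap.pi fun s => (Finsupp.domLCongr (M := k) (R := k) (pEquiv hac i.2 x.2)).symm.toLinearMap ∘ₗ
      LinearMap.proj s ∘ₗ LinearMap.proj (R := k) i.1

theorem TTfwd_apply_ne (x : VertexRemoved Q v)
    (u : (QProjD k (VertexRemoved Q v) (fun i => d i.1)).V x) {j : Q} (hj : j ≠ v) :
    TTfwd hac d x u j = fun s =>
      Finsupp.domLCongr (M := k) (R := k) (pEquiv hac hj x.2) (u (vmk v j hj) s) := by
  have h1 : TTfwd hac d x u j
      = ((if h : j = v then 0 else
          LinearMap.pi fun s => (Finsupp.domLCongr (M := k) (R := k) (pEquiv hac h x.2)).toLinearMap ∘ₗ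
            LinearMap.proj s ∘ₗ LinearMap.proj (R := k) (vmk v j h)) :
          (QProjD k (VertexRemoved Q v) (fun i => d i.1)).V x →ₗ[k]
            (Fin (d j) → (Quiver.Path j x.1 →₀ k))) u := rfl
  rw [h1, dif_neg hj]
  rfl

theorem TTfwd_apply_v (x : VertexRemoved Q v)
    (u : (QProjD k (VertexRemoved Q v) (fun i => d i.1)).V x) :
    TTfwd hac d x u v = 0 := by
  have h1 : TTfwd hac d x u v
      = ((if h : v = v then 0 else
          LinearMap.pi fun s => (Finsupp.domLCongr (M := k) (R := k) (pEquiv hac h x.2)).toLinearMap ∘ₗ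
            LinearMap.proj s ∘ₗ LinearMap.proj (R := k) (vmk v v h)) :
          (QProjD k (VertexRemoved Q v) (fun i => d i.1)).V x →ₗ[k]
            (Fin (d v) → (Quiver.Path v x.1 →₀ k))) u := rfl
  rw [h1, dif_pos rfl]
  rfl

theorem TTbwd_apply (x : VertexRemoved Q v) (w : (QProjD k Q d).V x.1)
    (i : VertexRemoved Q v) (s : Fin (d i.1)) :
    TTbwd hac d x w i s
      = (Finsupp.domLCongr (M := k) (R := k) (pEquiv hac i.2 x.2)).symm (w i.1 s) := rfl

/-- The comparison equivalence between the projective representations over `Q̄` and `Q`. -/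
noncomputable def TT (x : VertexRemoved Q v) :
    (QProjD k (VertexRemoved Q v) (fun i => d i.1)).V x ≃ₗ[k] (QProjD k Q d).V x.1 :=
  LinearEquiv.ofLinear (TTfwd hac d x) (TTbwd hac d x)
    (by
      apply LinearMap.ext; intro w
      funext i
      by_cases h : i = v
      · subst h
        funext s
        exact Fin.elim0 (Fin.cast hv s)
      · funext s
        calc TTfwd hac d x (TTbwd hac d x w) i s
            = Finsupp.domLCongr (M := k) (R := k) (pEquiv hac h x.2)
                ((TTbwd hac d x w) (vmk v i h) s) := by
              rw [TTfwd_apply_ne hac d x _ h]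
          _ = Finsupp.domLCongr (M := k) (R := k) (pEquiv hac h x.2)
                ((Finsupp.domLCongr (M := k) (R := k) (pEquiv hac h x.2)).symm (w i s)) := rfl
          _ = w i s := (Finsupp.domLCongr (M := k) (R := k) _).apply_symm_apply _)
    (by
      apply LinearMap.ext; intro u
      funext i s
      refine Eq.trans (b := (Finsupp.domLCongr (M := k) (R := k) (pEquiv hac i.2 x.2)).symm
          ((TTfwd hac d x u) i.1 s)) rfl ?_
      rw [TTfwd_apply_ne hac d x _ i.2]
      exact (Finsupp.domLCongr (M := k) (R := k) _).symm_apply_apply _)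

theorem TT_apply_ne (x : VertexRemoved Q v)
    (u : (QProjD k (VertexRemoved Q v) (fun i => d i.1)).V x) {j : Q} (hj : j ≠ v) :
    TT hac d hv x u j = fun s =>
      Finsupp.domLCongr (M := k) (R := k) (pEquiv hac hj x.2) (u (vmk v j hj) s) :=
  TTfwd_apply_ne hac d x u hj

theorem TT_apply_v (x : VertexRemoved Q v)
    (u : (QProjD k (VertexRemoved Q v) (fun i => d i.1)).V x) :
    TT hac d hv x u v = 0 :=
  TTfwd_apply_v hac d x u

theorem TT_symm_apply (x : VertexRemoved Q v) (w : (QProjD k Q d).V x.1)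
    (i : VertexRemoved Q v) (s : Fin (d i.1)) :
    (TT hac d hv x).symm w i s
      = (Finsupp.domLCongr (M := k) (R := k) (pEquiv hac i.2 x.2)).symm (w i.1 s) := rfl

theorem TT_ssingle (x : VertexRemoved Q v) (i : VertexRemoved Q v) (s : Fin (d i.1))
    (P : Quiver.Path i x) :
    TT hac d hv x (ssingle (fun j => d j.1) i s (Finsupp.single P (1 : k)))
      = ssingle d i.1 s (Finsupp.single (psi P) (1 : k)) := by
  letI := Classical.decEq Q
  letI := Classical.decEq (VertexRemoved Q v)
  funext j
  by_cases hj : j = v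
  · rw [hj, TT_apply_v]
    simp [ssingle, Pi.single_eq_of_ne (Ne.symm i.2)]
  · rw [TT_apply_ne hac d hv x _ hj]
    by_cases hji : j = i.1
    · subst hji
      have e1 : (ssingle (fun j' => d j'.1) i s (Finsupp.single P (1 : k))) (vmk v i.1 hj)
          = Pi.single s (Finsupp.single P (1 : k)) := Pi.single_eq_same _ _
      funext t
      rcases eq_or_ne t s with rfl | ht
      · rw [e1]
        exact ((congrArg (Finsupp.domLCongr (M := k) (R := k) (pEquiv hac hj x.2))
          (Pi.single_eq_same t _)).trans (Finsupp.domLCongr_single _ _ _)).trans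
          ((congrFun (Pi.single_eq_same (M := fun j => Fin (d j) → (Quiver.Path j x.1 →₀ k))
            i.1 _) t).trans (Pi.single_eq_same t _)).symm
      · rw [e1]
        exact ((congrArg (Finsupp.domLCongr (M := k) (R := k) (pEquiv hac hj x.2))
          (Pi.single_eq_of_ne ht _)).trans (map_zero _)).trans
          ((congrFun (Pi.single_eq_same (M := fun j => Fin (d j) → (Quiver.Path j x.1 →₀ k))
            i.1 _) t).trans (Pi.single_eq_of_ne ht _)).symm
    · have h1 : vmk v j hj ≠ i := fun h => hji (congrArg Subtype.val h)
      have e1 : (ssingle (fun j' => d j'.1) i s (Finsupp.single P (1 : k))) (vmk v j hj)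
          = 0 := Pi.single_eq_of_ne h1 _
      funext t
      rw [e1]
      exact (map_zero _).trans ((congrFun (Pi.single_eq_of_ne
        (M := fun j => Fin (d j) → (Quiver.Path j x.1 →₀ k)) hji _) t).symm)

@[simp] theorem psi_pEquiv_symm' (x : VertexRemoved Q v) {i : Q} (hi : i ≠ v)
    (q : Quiver.Path i x.1) :
    psi (((pEquiv hac hi x.2).symm q : Quiver.Path (vmk v i hi) x)) = q :=
  psi_pEquiv_symm hac hi x.2 q

theorem TT_symm_ssingle (x : VertexRemoved Q v) (i : Q) (hi : i ≠ v) (s : Fin (d i))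
    (p : Quiver.Path i x.1) :
    (TT hac d hv x).symm (ssingle d i s (Finsupp.single p (1 : k)))
      = ssingle (fun j => d j.1) (vmk v i hi) s
          (Finsupp.single ((pEquiv hac hi x.2).symm p) (1 : k)) := by
  apply (TT hac d hv x).injective
  erw [LinearEquiv.apply_symm_apply, TT_ssingle, psi_pEquiv_symm' hac x hi]
  simp [vmk]

end Main
section Build

attribute [local instance 10] Classical.propDecidable

variable {k : Type} [Field k] {Q : Type} [Quiver.{0} Q] [Fintype Q] {v : Q}
  (hac : QAcyclic Q) (d : Q → ℕ) (hv : d v = 0)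

theorem TT_comm_inl {x y : VertexRemoved Q v} (a : x.1 ⟶ y.1) :
    (QProjD k Q d).map a ∘ₗ (TT hac d hv x).toLinearMap
      = (TT hac d hv y).toLinearMap ∘ₗ
        (QProjD k (VertexRemoved Q v) (fun j => d j.1)).map (Sum.inl a : x ⟶ y) := by
  refine hom_ext _ fun i s P => ?_
  simp only [LinearMap.comp_apply, LinearEquiv.coe_coe]
  rw [TT_ssingle, map_ssingle, Finsupp.mapDomain_single,
      map_ssingle, Finsupp.mapDomain_single, TT_ssingle]
  simp only [psi]

theorem TT_comm_inr {x y : VertexRemoved Q v} (α : x.1 ⟶ v) (β : v ⟶ y.1) :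
    (QProjD k Q d).map β ∘ₗ (QProjD k Q d).map α ∘ₗ (TT hac d hv x).toLinearMap
      = (TT hac d hv y).toLinearMap ∘ₗ
        (QProjD k (VertexRemoved Q v) (fun j => d j.1)).map (Sum.inr ⟨α, β⟩ : x ⟶ y) := by
  refine hom_ext _ fun i s P => ?_
  simp only [LinearMap.comp_apply, LinearEquiv.coe_coe]
  rw [TT_ssingle, map_ssingle, Finsupp.mapDomain_single,
      map_ssingle, Finsupp.mapDomain_single,
      map_ssingle, Finsupp.mapDomain_single, TT_ssingle]
  simp only [psi]

theorem TT_comm_inl_apply {x y : VertexRemoved Q v} (a : x.1 ⟶ y.1)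
    (w : (QProjD k (VertexRemoved Q v) (fun j => d j.1)).V x) :
    (QProjD k Q d).map a (TT hac d hv x w)
      = TT hac d hv y
          ((QProjD k (VertexRemoved Q v) (fun j => d j.1)).map (Sum.inl a : x ⟶ y) w) :=
  LinearMap.congr_fun (TT_comm_inl hac d hv a) w

theorem TT_comm_inr_apply {x y : VertexRemoved Q v} (α : x.1 ⟶ v) (β : v ⟶ y.1)
    (w : (QProjD k (VertexRemoved Q v) (fun j => d j.1)).V x) :
    (QProjD k Q d).map β ((QProjD k Q d).map α (TT hac d hv x w))
      = TT hac d hv y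
          ((QProjD k (VertexRemoved Q v) (fun j => d j.1)).map (Sum.inr ⟨α, β⟩ : x ⟶ y) w) :=
  LinearMap.congr_fun (TT_comm_inr hac d hv α β) w

/-- Conjugation of an endomorphism of the `Q̄`-side projective at a vertex `x ≠ v`. -/
noncomputable def fNon
    (g : QRepHom (QProjD k (VertexRemoved Q v) (fun j => d j.1))
      (QProjD k (VertexRemoved Q v) (fun j => d j.1)))
    (x : Q) (hx : x ≠ v) : (QProjD k Q d).V x →ₗ[k] (QProjD k Q d).V x :=
  (TT hac d hv (vmk v x hx)).toLinearMap ∘ₗ g.app (vmk v x hx) ∘ₗ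
    (TT hac d hv (vmk v x hx)).symm.toLinearMap

theorem TT_symm_ssingle' (x : Q) (hxx : x ≠ v) (i : Q) (hi : i ≠ v) (s : Fin (d i))
    (p : Quiver.Path i x) :
    (TT hac d hv (vmk v x hxx)).symm (ssingle d i s (Finsupp.single p (1 : k)))
      = ssingle (fun j => d j.1) (vmk v i hi) s
          (Finsupp.single ((pEquiv hac hi hxx).symm p) (1 : k)) :=
  TT_symm_ssingle hac d hv (vmk v x hxx) i hi s p

/-- The value of the induced endomorphism at `v` on a path `p : i ⇝ v`. -/
noncomputable def FF
    (g : QRepHom (QProjD k (VertexRemoved Q v) (fun j => d j.1))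
      (QProjD k (VertexRemoved Q v) (fun j => d j.1)))
    (i : Q) (s : Fin (d i)) : Quiver.Path i v → (QProjD k Q d).V v
  | Quiver.Path.nil => 0
  | @Quiver.Path.cons _ _ _ z _ q α =>
    if hz : z = v then 0
    else (QProjD k Q d).map α (fNon hac d hv g z hz (ssingle d i s (Finsupp.single q 1)))

theorem FF_cons
    (g : QRepHom (QProjD k (VertexRemoved Q v) (fun j => d j.1))
      (QProjD k (VertexRemoved Q v) (fun j => d j.1)))
    (i : Q) (s : Fin (d i)) {z : Q} (hz : z ≠ v) (q : Quiver.Path i z) (α : z ⟶ v) :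
    FF hac d hv g i s (q.cons α)
      = (QProjD k Q d).map α (fNon hac d hv g z hz (ssingle d i s (Finsupp.single q 1))) := by
  simp only [FF]
  rw [dif_neg hz]

/-- The induced endomorphism at the removed vertex `v`. -/
noncomputable def sp
    (g : QRepHom (QProjD k (VertexRemoved Q v) (fun j => d j.1))
      (QProjD k (VertexRemoved Q v) (fun j => d j.1))) :
    (QProjD k Q d).V v →ₗ[k] (QProjD k Q d).V v :=
  ∑ i : Q, ∑ s : Fin (d i),
    (Finsupp.lsum k fun q => LinearMap.toSpanSingleton k _ (FF hac d hv g i s q)) ∘ₗ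
      LinearMap.proj s ∘ₗ LinearMap.proj (R := k) i

theorem sp_ssingle
    (g : QRepHom (QProjD k (VertexRemoved Q v) (fun j => d j.1))
      (QProjD k (VertexRemoved Q v) (fun j => d j.1)))
    (i : Q) (s : Fin (d i)) (p : Quiver.Path i v) :
    sp hac d hv g (ssingle d i s (Finsupp.single p 1)) = FF hac d hv g i s p := by
  letI := Classical.decEq Q
  have expand : sp hac d hv g (ssingle d i s (Finsupp.single p 1))
      = ∑ j : Q, ∑ t : Fin (d j),
          (Finsupp.lsum k fun q => LinearMap.toSpanSingleton k _ (FF hac d hv g j t q))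
            ((ssingle d i s (Finsupp.single p (1 : k))) j t) := by
    simp only [sp, LinearMap.sum_apply, LinearMap.comp_apply, LinearMap.proj_apply]
    rfl
  rw [expand, Finset.sum_eq_single i]
  · rw [Finset.sum_eq_single s]
    · have h1 : (ssingle d i s (Finsupp.single p (1 : k))) i s = Finsupp.single p 1 := by
        simp [ssingle]
      rw [h1, Finsupp.lsum_single, LinearMap.toSpanSingleton_apply, one_smul]
    · intro t _ ht
      have h1 : (ssingle d i s (Finsupp.single p (1 : k))) i t = 0 := by
        simp [ssingle, Pi.single_eq_of_ne ht]
      rw [h1, map_zero]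
    · intro h; exact absurd (Finset.mem_univ s) h
  · intro j _ hj
    refine Finset.sum_eq_zero fun t _ => ?_
    have h1 : (ssingle d i s (Finsupp.single p (1 : k))) j t = 0 := by
      simp [ssingle, Pi.single_eq_of_ne hj]
    rw [h1, map_zero]
  · intro h; exact absurd (Finset.mem_univ i) h

theorem commA
    (g : QRepHom (QProjD k (VertexRemoved Q v) (fun j => d j.1))
      (QProjD k (VertexRemoved Q v) (fun j => d j.1)))
    {x y : Q} (hx : x ≠ v) (hy : y ≠ v) (a : x ⟶ y) :
    (QProjD k Q d).map a ∘ₗ fNon hac d hv g x hx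
      = fNon hac d hv g y hy ∘ₗ (QProjD k Q d).map a := by
  refine hom_ext _ fun i s p => ?_
  by_cases hi : i = v
  · exact Fin.elim0 (Fin.cast (by rw [hi, hv]) s)
  simp only [LinearMap.comp_apply]
  have e1 : fNon hac d hv g x hx (ssingle d i s (Finsupp.single p 1))
      = TT hac d hv (vmk v x hx) (g.app (vmk v x hx)
          (ssingle (fun j => d j.1) (vmk v i hi) s
            (Finsupp.single ((pEquiv hac hi hx).symm p) 1))) := by
    show TT hac d hv (vmk v x hx) (g.app (vmk v x hx)
        ((TT hac d hv (vmk v x hx)).symm (ssingle d i s (Finsupp.single p 1)))) = _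
    rw [TT_symm_ssingle' hac d hv x hx i hi s p]
  have e2 : (QProjD k Q d).map a (ssingle d i s (Finsupp.single p 1))
      = ssingle d i s (Finsupp.single (p.cons a) 1) := by
    rw [map_ssingle, Finsupp.mapDomain_single]
  have e3 : fNon hac d hv g y hy (ssingle d i s (Finsupp.single (p.cons a) 1))
      = TT hac d hv (vmk v y hy) (g.app (vmk v y hy)
          (ssingle (fun j => d j.1) (vmk v i hi) s
            (Finsupp.single (((pEquiv hac hi hx).symm p).cons
              (Sum.inl a : vmk v x hx ⟶ vmk v y hy)) 1))) := by
    show TT hac d hv (vmk v y hy) (g.app (vmk v y hy)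
        ((TT hac d hv (vmk v y hy)).symm (ssingle d i s (Finsupp.single (p.cons a) 1)))) = _
    erw [TT_symm_ssingle' hac d hv y hy i hi s (p.cons a),
        pEquiv_symm_cons_inl hac hi hx hy p a]
  have e4 : ssingle (fun j => d j.1) (vmk v i hi) s
        (Finsupp.single (((pEquiv hac hi hx).symm p).cons
          (Sum.inl a : vmk v x hx ⟶ vmk v y hy)) 1)
      = (QProjD k (VertexRemoved Q v) (fun j => d j.1)).map
          (Sum.inl a : vmk v x hx ⟶ vmk v y hy)
          (ssingle (fun j => d j.1) (vmk v i hi) s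
            (Finsupp.single ((pEquiv hac hi hx).symm p) 1)) := by
    exact ((map_ssingle (k := k) _ _ _ _ _).trans (congrArg (ssingle (k := k) (fun j => d j.1) (vmk v i hi) s)
      Finsupp.mapDomain_single)).symm
  have hc : ∀ w, (QProjD k (VertexRemoved Q v) (fun j => d j.1)).map
        (Sum.inl a : vmk v x hx ⟶ vmk v y hy) (g.app (vmk v x hx) w)
      = g.app (vmk v y hy) ((QProjD k (VertexRemoved Q v) (fun j => d j.1)).map
          (Sum.inl a : vmk v x hx ⟶ vmk v y hy) w) :=
    fun w => LinearMap.congr_fun (g.comm (Sum.inl a : vmk v x hx ⟶ vmk v y hy)) w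
  rw [e1, e2, e3, e4, ← hc]
  exact TT_comm_inl_apply hac d hv (x := vmk v x hx) (y := vmk v y hy) a _

theorem commC
    (g : QRepHom (QProjD k (VertexRemoved Q v) (fun j => d j.1))
      (QProjD k (VertexRemoved Q v) (fun j => d j.1)))
    {x : Q} (hx : x ≠ v) (α : x ⟶ v) :
    (QProjD k Q d).map α ∘ₗ fNon hac d hv g x hx
      = sp hac d hv g ∘ₗ (QProjD k Q d).map α := by
  refine hom_ext _ fun i s p => ?_
  by_cases hi : i = v
  · exact Fin.elim0 (Fin.cast (by rw [hi, hv]) s)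
  simp only [LinearMap.comp_apply]
  rw [map_ssingle, Finsupp.mapDomain_single, sp_ssingle, FF_cons hac d hv g i s hx p α]

theorem commB
    (g : QRepHom (QProjD k (VertexRemoved Q v) (fun j => d j.1))
      (QProjD k (VertexRemoved Q v) (fun j => d j.1)))
    {y : Q} (hy : y ≠ v) (a : v ⟶ y) :
    (QProjD k Q d).map a ∘ₗ sp hac d hv g
      = fNon hac d hv g y hy ∘ₗ (QProjD k Q d).map a := by
  refine hom_ext _ fun i s p => ?_
  by_cases hi : i = v
  · exact Fin.elim0 (Fin.cast (by rw [hi, hv]) s)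
  simp only [LinearMap.comp_apply]
  cases p with
  | nil => exact absurd rfl hi
  | cons q α =>
    rename_i z
    have hz : z ≠ v := fun h => no_loop hac v (h ▸ α)
    rw [sp_ssingle, FF_cons hac d hv g i s hz q α]
    have e1 : fNon hac d hv g z hz (ssingle d i s (Finsupp.single q 1))
        = TT hac d hv (vmk v z hz) (g.app (vmk v z hz)
            (ssingle (fun j => d j.1) (vmk v i hi) s
              (Finsupp.single ((pEquiv hac hi hz).symm q) 1))) := by
      show TT hac d hv (vmk v z hz) (g.app (vmk v z hz)
          ((TT hac d hv (vmk v z hz)).symm (ssingle d i s (Finsupp.single q 1)))) = _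
      rw [TT_symm_ssingle' hac d hv z hz i hi s q]
    have e2 : (QProjD k Q d).map a (ssingle d i s (Finsupp.single ((q.cons α)) 1))
        = ssingle d i s (Finsupp.single ((q.cons α).cons a) 1) := by
      rw [map_ssingle, Finsupp.mapDomain_single]
    have e3 : fNon hac d hv g y hy (ssingle d i s (Finsupp.single ((q.cons α).cons a) 1))
        = TT hac d hv (vmk v y hy) (g.app (vmk v y hy)
            (ssingle (fun j => d j.1) (vmk v i hi) s
              (Finsupp.single (((pEquiv hac hi hz).symm q).cons
                (Sum.inr ⟨α, a⟩ : vmk v z hz ⟶ vmk v y hy)) 1))) := by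
      show TT hac d hv (vmk v y hy) (g.app (vmk v y hy)
          ((TT hac d hv (vmk v y hy)).symm
            (ssingle d i s (Finsupp.single ((q.cons α).cons a) 1)))) = _
      erw [TT_symm_ssingle' hac d hv y hy i hi s ((q.cons α).cons a),
          pEquiv_symm_cons_inr hac hi hz hy q α a]
    have e4 : ssingle (fun j => d j.1) (vmk v i hi) s
          (Finsupp.single (((pEquiv hac hi hz).symm q).cons
            (Sum.inr ⟨α, a⟩ : vmk v z hz ⟶ vmk v y hy)) 1)
        = (QProjD k (VertexRemoved Q v) (fun j => d j.1)).map
            (Sum.inr ⟨α, a⟩ : vmk v z hz ⟶ vmk v y hy)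
            (ssingle (fun j => d j.1) (vmk v i hi) s
              (Finsupp.single ((pEquiv hac hi hz).symm q) 1)) := by
      exact ((map_ssingle (k := k) _ _ _ _ _).trans (congrArg (ssingle (k := k) (fun j => d j.1) (vmk v i hi) s)
        Finsupp.mapDomain_single)).symm
    have hc : ∀ w, (QProjD k (VertexRemoved Q v) (fun j => d j.1)).map
          (Sum.inr ⟨α, a⟩ : vmk v z hz ⟶ vmk v y hy) (g.app (vmk v z hz) w)
        = g.app (vmk v y hy) ((QProjD k (VertexRemoved Q v) (fun j => d j.1)).map
            (Sum.inr ⟨α, a⟩ : vmk v z hz ⟶ vmk v y hy) w) :=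
      fun w => LinearMap.congr_fun (g.comm (Sum.inr ⟨α, a⟩ : vmk v z hz ⟶ vmk v y hy)) w
    rw [e1, e2, e3, e4, ← hc]
    exact TT_comm_inr_apply hac d hv (x := vmk v z hz) (y := vmk v y hy) α a _

/-- The app-component of the backward map. -/
noncomputable def Gapp
    (g : QRepHom (QProjD k (VertexRemoved Q v) (fun j => d j.1))
      (QProjD k (VertexRemoved Q v) (fun j => d j.1)))
    (x : Q) : (QProjD k Q d).V x →ₗ[k] (QProjD k Q d).V x :=
  if hx : x = v then hx ▸ sp hac d hv g else fNon hac d hv g x hx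

theorem Gapp_v
    (g : QRepHom (QProjD k (VertexRemoved Q v) (fun j => d j.1))
      (QProjD k (VertexRemoved Q v) (fun j => d j.1))) :
    Gapp hac d hv g v = sp hac d hv g :=
  dif_pos rfl

theorem Gapp_ne
    (g : QRepHom (QProjD k (VertexRemoved Q v) (fun j => d j.1))
      (QProjD k (VertexRemoved Q v) (fun j => d j.1)))
    {x : Q} (hx : x ≠ v) :
    Gapp hac d hv g x = fNon hac d hv g x hx :=
  dif_neg hx

/-- The backward map on endomorphism algebras. -/
noncomputable def Gmap
    (g : QRepHom (QProjD k (VertexRemoved Q v) (fun j => d j.1))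
      (QProjD k (VertexRemoved Q v) (fun j => d j.1))) :
    QRepHom (QProjD k Q d) (QProjD k Q d) where
  app := Gapp hac d hv g
  comm {x y} a := by
    by_cases hx : x = v
    · by_cases hy : y = v
      · exfalso
        subst hx
        exact no_loop hac _ (hy ▸ a)
      · subst hx
        rw [Gapp_v, Gapp_ne hac d hv g hy]
        exact commB hac d hv g hy a
    · by_cases hy : y = v
      · subst hy
        rw [Gapp_ne hac d hv g hx, Gapp_v]
        exact commC hac d hv g hx a
      · rw [Gapp_ne hac d hv g hx, Gapp_ne hac d hv g hy]
        exact commA hac d hv g hx hy a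

theorem Gmap_app_v
    (g : QRepHom (QProjD k (VertexRemoved Q v) (fun j => d j.1))
      (QProjD k (VertexRemoved Q v) (fun j => d j.1))) :
    (Gmap hac d hv g).app v = sp hac d hv g :=
  Gapp_v hac d hv g

theorem Gmap_app_ne
    (g : QRepHom (QProjD k (VertexRemoved Q v) (fun j => d j.1))
      (QProjD k (VertexRemoved Q v) (fun j => d j.1)))
    {x : Q} (hx : x ≠ v) :
    (Gmap hac d hv g).app x = fNon hac d hv g x hx :=
  Gapp_ne hac d hv g hx

/-- The forward map on endomorphism algebras. -/
noncomputable def Emap (f : QRepHom (QProjD k Q d) (QProjD k Q d)) :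
    QRepHom (QProjD k (VertexRemoved Q v) (fun j => d j.1))
      (QProjD k (VertexRemoved Q v) (fun j => d j.1)) where
  app x := (TT hac d hv x).symm.toLinearMap ∘ₗ f.app x.1 ∘ₗ (TT hac d hv x).toLinearMap
  comm {x y} a := by
    apply LinearMap.ext; intro u
    simp only [LinearMap.comp_apply, LinearEquiv.coe_coe]
    apply (TT hac d hv y).injective
    rcases a with a | ⟨α, β⟩
    · have hc : ∀ w, (QProjD k Q d).map a (f.app x.1 w)
          = f.app y.1 ((QProjD k Q d).map a w) := fun w => LinearMap.congr_fun (f.comm a) w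
      rw [LinearEquiv.apply_symm_apply,
          ← TT_comm_inl_apply hac d hv (x := x) (y := y) a
            ((TT hac d hv x).symm (f.app x.1 (TT hac d hv x u))),
          LinearEquiv.apply_symm_apply, hc, TT_comm_inl_apply hac d hv (x := x) (y := y) a u]
    · have hcα : ∀ w, (QProjD k Q d).map α (f.app x.1 w)
          = f.app v ((QProjD k Q d).map α w) := fun w => LinearMap.congr_fun (f.comm α) w
      have hcβ : ∀ w, (QProjD k Q d).map β (f.app v w)
          = f.app y.1 ((QProjD k Q d).map β w) := fun w => LinearMap.congr_fun (f.comm β) w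
      rw [LinearEquiv.apply_symm_apply,
          ← TT_comm_inr_apply hac d hv (x := x) (y := y) α β
            ((TT hac d hv x).symm (f.app x.1 (TT hac d hv x u))),
          LinearEquiv.apply_symm_apply, hcα, hcβ,
          TT_comm_inr_apply hac d hv (x := x) (y := y) α β u]

theorem fNon_Emap (f : QRepHom (QProjD k Q d) (QProjD k Q d)) (x : Q) (hx : x ≠ v) :
    fNon hac d hv (Emap hac d hv f) x hx = f.app x := by
  apply LinearMap.ext; intro u
  show TT hac d hv (vmk v x hx) ((TT hac d hv (vmk v x hx)).symm
    (f.app x (TT hac d hv (vmk v x hx) ((TT hac d hv (vmk v x hx)).symm u)))) = f.app x u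
  erw [LinearEquiv.apply_symm_apply, LinearEquiv.apply_symm_apply]

theorem sp_Emap (f : QRepHom (QProjD k Q d) (QProjD k Q d)) :
    sp hac d hv (Emap hac d hv f) = f.app v := by
  refine hom_ext _ fun i s p => ?_
  by_cases hi : i = v
  · exact Fin.elim0 (Fin.cast (by rw [hi, hv]) s)
  cases p with
  | nil => exact absurd rfl hi
  | cons q α =>
    rename_i z
    have hz : z ≠ v := fun h => no_loop hac v (h ▸ α)
    rw [sp_ssingle, FF_cons hac d hv _ i s hz q α, fNon_Emap hac d hv f z hz]
    have hc : ∀ w, (QProjD k Q d).map α (f.app z w)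
        = f.app v ((QProjD k Q d).map α w) := fun w => LinearMap.congr_fun (f.comm α) w
    rw [hc, map_ssingle, Finsupp.mapDomain_single]

theorem Gmap_Emap (f : QRepHom (QProjD k Q d) (QProjD k Q d)) :
    Gmap hac d hv (Emap hac d hv f) = f := by
  apply QRepHom.ext
  funext x
  by_cases hx : x = v
  · rw [hx, Gmap_app_v, sp_Emap]
  · rw [Gmap_app_ne hac d hv _ hx, fNon_Emap]

theorem Emap_Gmap
    (g : QRepHom (QProjD k (VertexRemoved Q v) (fun j => d j.1))
      (QProjD k (VertexRemoved Q v) (fun j => d j.1))) :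
    Emap hac d hv (Gmap hac d hv g) = g := by
  apply QRepHom.ext
  funext x
  show (TT hac d hv x).symm.toLinearMap ∘ₗ (Gmap hac d hv g).app x.1 ∘ₗ
    (TT hac d hv x).toLinearMap = g.app x
  rw [Gmap_app_ne hac d hv g x.2]
  apply LinearMap.ext; intro u
  show (TT hac d hv x).symm (TT hac d hv x (g.app x
    ((TT hac d hv x).symm (TT hac d hv x u)))) = g.app x u
  rw [LinearEquiv.symm_apply_apply, LinearEquiv.symm_apply_apply]

theorem Emap_comp (f f' : QRepHom (QProjD k Q d) (QProjD k Q d)) :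
    Emap hac d hv (f.comp f') = (Emap hac d hv f).comp (Emap hac d hv f') := by
  apply QRepHom.ext
  funext x
  apply LinearMap.ext; intro u
  show (TT hac d hv x).symm (f.app x.1 (f'.app x.1 (TT hac d hv x u)))
      = (TT hac d hv x).symm (f.app x.1 (TT hac d hv x
          ((TT hac d hv x).symm (f'.app x.1 (TT hac d hv x u)))))
  rw [LinearEquiv.apply_symm_apply]

theorem Emap_add (f f' : QRepHom (QProjD k Q d) (QProjD k Q d)) :
    Emap hac d hv (f + f') = Emap hac d hv f + Emap hac d hv f' := by
  apply QRepHom.ext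
  funext x
  apply LinearMap.ext; intro u
  show (TT hac d hv x).symm ((f.app x.1 + f'.app x.1) (TT hac d hv x u))
      = (TT hac d hv x).symm (f.app x.1 (TT hac d hv x u))
        + (TT hac d hv x).symm (f'.app x.1 (TT hac d hv x u))
  rw [LinearMap.add_apply, map_add]

theorem Emap_one : Emap hac d hv (QRepHom.id (QProjD k Q d)) = QRepHom.id _ := by
  apply QRepHom.ext
  funext x
  apply LinearMap.ext; intro u
  show (TT hac d hv x).symm (TT hac d hv x u) = u
  exact (TT hac d hv x).symm_apply_apply u

theorem Emap_smul (c : k) (f : QRepHom (QProjD k Q d) (QProjD k Q d)) :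
    Emap hac d hv (c • f) = c • Emap hac d hv f := by
  apply QRepHom.ext
  funext x
  apply LinearMap.ext; intro u
  show (TT hac d hv x).symm ((c • f.app x.1) (TT hac d hv x u))
      = c • (TT hac d hv x).symm (f.app x.1 (TT hac d hv x u))
  rw [LinearMap.smul_apply, map_smul]

end Build

end ZVR

/-- Zero-vertex removal: if `d v = 0`, then `End(P_{Q,d}) ≅ End(P_{Q̄,d̄})` as
`k`-algebras, where `Q̄` removes `v` and replaces paths of length two through `v` by
arrows, and `d̄` is the restriction of `d`. -/
theorem stmt_13 (k : Type) [Field k] (Q : Type) [Quiver.{0} Q] [Fintype Q]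
    (hacyclic : QAcyclic Q) (d : Q → ℕ) (v : Q) (hv : d v = 0) :
    ∃ e : QRepHom (QProjD k Q d) (QProjD k Q d) ≃
        QRepHom (QProjD k (VertexRemoved Q v) fun x => d x.1)
          (QProjD k (VertexRemoved Q v) fun x => d x.1),
      (∀ x y, e (x * y) = e x * e y) ∧ (∀ x y, e (x + y) = e x + e y) ∧
        e 1 = 1 ∧ ∀ (c : k) x, e (c • x) = c • e x := by
  refine ⟨⟨ZVR.Emap hacyclic d hv, ZVR.Gmap hacyclic d hv,
    ZVR.Gmap_Emap hacyclic d hv, ZVR.Emap_Gmap hacyclic d hv⟩,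
    fun x y => ?_, fun x y => ZVR.Emap_add hacyclic d hv x y, ?_,
    fun c x => ZVR.Emap_smul hacyclic d hv c x⟩
  · exact ZVR.Emap_comp hacyclic d hv x y
  · exact ZVR.Emap_one hacyclic d hv
end

section
/- Let Q be a finite acyclic quiver on vertices {1,...,n} such that every arrow i→j satisfies i<j and n is the only sink. Let P_{Q,d} be a projective representation with underlying vector space V = ⊕_{i=1}^n V_i. Then the map End(P_{Q,d}) → End(V_n) sending f = (f_1,...,f_n) to its component f_n at vertex n is injective. -/
/-- For an oriented quiver on vertices `0 < 1 < ⋯ < n` (arrows only increase, and the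
last vertex is the only sink), the evaluation `f ↦ f_n` of an endomorphism of the
projective representation `P_{Q,d}` at the unique sink is injective. -/
theorem stmt_19 (k : Type) [Field k] (n : ℕ) [Quiver.{0} (Fin (n + 1))]
    [∀ i j : Fin (n + 1), Fintype (i ⟶ j)]
    (harrow : ∀ i j : Fin (n + 1), (i ⟶ j) → i < j)
    (hsink : ∀ i : Fin (n + 1), i ≠ Fin.last n → ∃ j, Nonempty (i ⟶ j))
    (d : Fin (n + 1) → ℕ) :
    Function.Injective
      (fun f : QRepHom (QProjD k (Fin (n + 1)) d) (QProjD k (Fin (n + 1)) d) =>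
        f.app (Fin.last n)) := by
  intro f g hfg
  have key : ∀ m : ℕ, ∀ i : Fin (n + 1), n - i.val ≤ m → f.app i = g.app i := by
    intro m
    induction m with
    | zero =>
      intro i hi
      have hle : n ≤ i.val := Nat.le_of_sub_eq_zero (Nat.le_zero.mp hi)
      have : i = Fin.last n := Fin.ext (le_antisymm (Nat.lt_succ_iff.mp i.isLt) hle)
      rw [this]; exact hfg
    | succ m ih =>
      intro i hi
      by_cases hlast : i = Fin.last n
      · rw [hlast]; exact hfg
      · obtain ⟨j, ⟨a⟩⟩ := hsink i hlast
        have hij : i < j := harrow i j a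
        have hj : n - j.val ≤ m := by omega
        have hji := ih j hj
        have hinj : Function.Injective ((QProjD k (Fin (n + 1)) d).map a) := by
          intro x y hxy
          funext jdx s
          have h : ((QProjD k (Fin (n + 1)) d).map a x) jdx s
              = ((QProjD k (Fin (n + 1)) d).map a y) jdx s := by rw [hxy]
          simp only [QProjD, LinearMap.pi_apply, LinearMap.comp_apply,
            LinearMap.proj_apply, Finsupp.lmapDomain_apply] at h
          exact Finsupp.mapDomain_injective (fun p q hpq => by injection hpq) h
        apply LinearMap.ext
        intro x
        apply hinj
        have h1 := LinearMap.congr_fun (f.comm a) x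
        have h2 := LinearMap.congr_fun (g.comm a) x
        simp only [LinearMap.comp_apply] at h1 h2
        rw [h1, h2, hji]
  have := key n (Fin.last n)
  ext : 1
  funext i
  exact key n i (Nat.sub_le _ _)
end
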